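/- For every u in H and v in V, B(u,v) belongs to H and |B(u,v)| ≤ C₁ |u| ‖v‖, where C₁ = |a|(λ^{-1} + λ) + |b|(λ^{-1} + 1). -/
import Mathlib


open scoped BigOperators
open MeasureTheory Filter Topology

noncomputable section

namespace Sabra

/-- Wavenumber of the shell with 0-based index `n` (paper index `n+1`): `k₀ λ^(n+1)`. -/
def kwav (k0 lam : ℝ) (n : ℕ) : ℝ := k0 * lam ^ (n + 1)

/-- Wavenumber for an integer paper index `j`: `k₀ λ^j`. -/
def kz (k0 lam : ℝ) (j : ℤ) : ℝ := k0 * lam ^ j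

/-- Extend a sequence `(u₁, u₂, …)` (stored at 0-based indices `0,1,…`) to integer paper
indices, with the convention `u_j = 0` for `j ≤ 0`. -/
def extz (u : ℕ → ℂ) (j : ℤ) : ℂ := if 0 < j then u (j.toNat - 1) else 0

/-- The sabra shell model bilinear map `B(u,v)`, componentwise: the component with 0-based
index `m` corresponds to the paper index `n = m+1`, and equals
`-i (a k_{n+1} v_{n+2} u*_{n+1} + b k_n v_{n+1} u*_{n-1} + a k_{n-1} u_{n-1} v_{n-2}
  + b k_{n-1} v_{n-1} u_{n-2})`. -/
def sabraB (a b k0 lam : ℝ) (u v : ℕ → ℂ) : ℕ → ℂ := fun m =>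
  -Complex.I *
    ((a : ℂ) * (kz k0 lam ((m : ℤ) + 2) : ℂ) * extz v ((m : ℤ) + 3)
        * starRingEnd ℂ (extz u ((m : ℤ) + 2))
      + (b : ℂ) * (kz k0 lam ((m : ℤ) + 1) : ℂ) * extz v ((m : ℤ) + 2)
        * starRingEnd ℂ (extz u (m : ℤ))
      + (a : ℂ) * (kz k0 lam (m : ℤ) : ℂ) * extz u (m : ℤ) * extz v ((m : ℤ) - 1)
      + (b : ℂ) * (kz k0 lam (m : ℤ) : ℂ) * extz v (m : ℤ) * extz u ((m : ℤ) - 1))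

/-- The inner product of `H = ℓ²`: `(u,v) = Σ uₙ vₙ*`. -/
def Hinner (u v : ℕ → ℂ) : ℂ := ∑' n, u n * starRingEnd ℂ (v n)

/-- The norm of `H = ℓ²`. -/
def Hnorm (u : ℕ → ℂ) : ℝ := Real.sqrt (∑' n, ‖u n‖ ^ 2)

/-- Membership in `H = ℓ²`. -/
def memH (u : ℕ → ℂ) : Prop := Summable (fun n => ‖u n‖ ^ 2)

/-- The norm of `V = D(A^{1/2})`: `‖u‖ = (Σ kₙ² |uₙ|²)^{1/2}`. -/
def Vnorm (k0 lam : ℝ) (u : ℕ → ℂ) : ℝ :=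
  Real.sqrt (∑' n, kwav k0 lam n ^ 2 * ‖u n‖ ^ 2)

/-- Membership in `V = D(A^{1/2})`. -/
def memV (k0 lam : ℝ) (u : ℕ → ℂ) : Prop :=
  Summable (fun n => kwav k0 lam n ^ 2 * ‖u n‖ ^ 2)

/-- The graph norm of `D(A)`: `|Au| = (Σ kₙ⁴ |uₙ|²)^{1/2}`. -/
def DAnorm (k0 lam : ℝ) (u : ℕ → ℂ) : ℝ :=
  Real.sqrt (∑' n, kwav k0 lam n ^ 4 * ‖u n‖ ^ 2)

/-- Membership in `D(A)`. -/
def memDA (k0 lam : ℝ) (u : ℕ → ℂ) : Prop :=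
  Summable (fun n => kwav k0 lam n ^ 4 * ‖u n‖ ^ 2)

/-- The dual norm of `V' = D(A^{-1/2})` (for an element of `V'` represented as a sequence
via the `H`-pairing): `(Σ kₙ⁻² |uₙ|²)^{1/2}`. -/
def VdualNorm (k0 lam : ℝ) (u : ℕ → ℂ) : ℝ :=
  Real.sqrt (∑' n, ‖u n‖ ^ 2 / kwav k0 lam n ^ 2)

/-- The pairing `⟨Au, v⟩ = ((u,v)) = Σ kₙ² uₙ vₙ*`. -/
def Aform (k0 lam : ℝ) (u v : ℕ → ℂ) : ℂ :=
  ∑' n, ((kwav k0 lam n ^ 2 : ℝ) : ℂ) * u n * starRingEnd ℂ (v n)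

/-- The constant `C₁ = |a|(λ⁻¹ + λ) + |b|(λ⁻¹ + 1)`. -/
def C1 (a b lam : ℝ) : ℝ := |a| * (lam⁻¹ + lam) + |b| * (lam⁻¹ + 1)

/-- The Gevrey norm `‖u‖_{G^{p,q}_τ} = (Σ e^{2τ kₙᵖ} kₙ^{2q} |uₙ|²)^{1/2}`. -/
def Gnorm (k0 lam p q τ : ℝ) (u : ℕ → ℂ) : ℝ :=
  Real.sqrt (∑' n, Real.exp (2 * τ * kwav k0 lam n ^ p) * kwav k0 lam n ^ (2 * q) * ‖u n‖ ^ 2)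

/-- Membership in the Gevrey class `G^{p,q}_τ`. -/
def memG (k0 lam p q τ : ℝ) (u : ℕ → ℂ) : Prop :=
  Summable (fun n => Real.exp (2 * τ * kwav k0 lam n ^ p) * kwav k0 lam n ^ (2 * q) * ‖u n‖ ^ 2)

/-- `u : ℝ → (ℕ → ℂ)` is a weak solution of the sabra shell model on `[0,T]` with force `f`
and initial datum `uin`: `u(0) = uin`, `u ∈ L^∞([0,T];H) ∩ L²([0,T];V)`, `u ∈ C([0,T];H)`,
and for every `φ ∈ V` and a.e. `t`, `d/dt (u,φ) + ν⟨Au,φ⟩ + ⟨B(u,u),φ⟩ = ⟨f,φ⟩`. -/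
def IsWeakSolutionOn (ν a b k0 lam T : ℝ) (f : ℝ → ℕ → ℂ) (uin : ℕ → ℂ)
    (u : ℝ → ℕ → ℂ) : Prop :=
  u 0 = uin ∧
  (∀ t ∈ Set.Icc (0 : ℝ) T, memH (u t)) ∧
  (∃ M, ∀ t ∈ Set.Icc (0 : ℝ) T, Hnorm (u t) ≤ M) ∧
  IntegrableOn (fun t => Vnorm k0 lam (u t) ^ 2) (Set.Icc (0 : ℝ) T) ∧
  (∀ φ, memV k0 lam φ →
    ∀ᵐ t ∂(volume.restrict (Set.Ioo (0 : ℝ) T)),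
      HasDerivAt (fun s => Hinner (u s) φ)
        (Hinner (f t) φ - (ν : ℂ) * Aform k0 lam (u t) φ
          - Hinner (sabraB a b k0 lam (u t) (u t)) φ) t) ∧
  (∀ t₀ ∈ Set.Icc (0 : ℝ) T,
    Tendsto (fun t => Hnorm (fun n => u t n - u t₀ n))
      (nhdsWithin t₀ (Set.Icc (0 : ℝ) T)) (nhds 0))

/-- `u : ℝ → (ℕ → ℂ)` is a weak solution of the sabra shell model on `[0,∞)`. -/
def IsWeakSolution (ν a b k0 lam : ℝ) (f : ℝ → ℕ → ℂ) (uin : ℕ → ℂ)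
    (u : ℝ → ℕ → ℂ) : Prop :=
  u 0 = uin ∧
  (∀ t, 0 ≤ t → memH (u t)) ∧
  (∀ T > (0 : ℝ), ∃ M, ∀ t ∈ Set.Icc (0 : ℝ) T, Hnorm (u t) ≤ M) ∧
  (∀ T > (0 : ℝ), IntegrableOn (fun t => Vnorm k0 lam (u t) ^ 2) (Set.Icc (0 : ℝ) T)) ∧
  (∀ φ, memV k0 lam φ →
    ∀ᵐ t ∂(volume.restrict (Set.Ioi (0 : ℝ))),
      HasDerivAt (fun s => Hinner (u s) φ)
        (Hinner (f t) φ - (ν : ℂ) * Aform k0 lam (u t) φ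
          - Hinner (sabraB a b k0 lam (u t) (u t)) φ) t) ∧
  (∀ t₀ ∈ Set.Ici (0 : ℝ),
    Tendsto (fun t => Hnorm (fun n => u t n - u t₀ n))
      (nhdsWithin t₀ (Set.Ici (0 : ℝ))) (nhds 0))

/-- The orthogonal projection onto the span of the first `m` canonical basis vectors. -/
def proj (m : ℕ) (u : ℕ → ℂ) : ℕ → ℂ := fun n => if n < m then u n else 0

/-- The `j`-th shell component in paper (1-based) indexing, with `u_0 = 0`. -/
def shellComp (u : ℕ → ℂ) (j : ℕ) : ℂ := if j = 0 then 0 else u (j - 1)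

/-! Auxiliary lemmas -/

lemma key_eq' (f : ℕ → ℂ) : (fun n => ‖f n‖ ^ ((2:ENNReal).toReal)) = fun n => ‖f n‖ ^ 2 := by
  funext n
  rw [ENNReal.toReal_ofNat, show ((2:ℝ)) = ((2:ℕ):ℝ) by norm_num, Real.rpow_natCast]

lemma memH_iff_memℓp' (f : ℕ → ℂ) : memH f ↔ Memℓp f 2 := by
  constructor
  · intro h
    exact memℓp_gen (by rw [key_eq' f]; exact h)
  · intro h
    have := h.summable (p := 2) (by norm_num)
    rwa [key_eq' f] at this

lemma Hnorm_eq_lp_norm' (f : ℕ → ℂ) (h : Memℓp f 2) :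
    Hnorm f = ‖(⟨f, h⟩ : lp (fun _ : ℕ => ℂ) 2)‖ := by
  rw [lp.norm_eq_tsum_rpow (by norm_num) ⟨f, h⟩, Hnorm, Real.sqrt_eq_rpow]
  have : (∑' (i : ℕ), ‖f i‖ ^ ((2:ENNReal).toReal)) = ∑' n, ‖f n‖ ^ 2 := by
    rw [key_eq' f]
  rw [this]
  norm_num

lemma hnorm_add' (f g : ℕ → ℂ) (hf : memH f) (hg : memH g) :
    memH (fun n => f n + g n) ∧ Hnorm (fun n => f n + g n) ≤ Hnorm f + Hnorm g := by
  have hf' := (memH_iff_memℓp' f).1 hf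
  have hg' := (memH_iff_memℓp' g).1 hg
  have hsum : Memℓp (fun n => f n + g n) 2 := hf'.add hg'
  refine ⟨(memH_iff_memℓp' _).2 hsum, ?_⟩
  rw [Hnorm_eq_lp_norm' f hf', Hnorm_eq_lp_norm' g hg', Hnorm_eq_lp_norm' _ hsum]
  exact norm_add_le (⟨f, hf'⟩ : lp (fun _ : ℕ => ℂ) 2) ⟨g, hg'⟩

lemma norm_extz_le' (u : ℕ → ℂ) (hu : memH u) (j : ℤ) : ‖extz u j‖ ≤ Hnorm u := by
  rw [extz]
  split_ifs with h
  · set n := j.toNat - 1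
    have h1 : ‖u n‖ ^ 2 ≤ ∑' k, ‖u k‖ ^ 2 := Summable.le_tsum hu n (fun k _ => sq_nonneg _)
    calc ‖u n‖ = Real.sqrt (‖u n‖ ^ 2) := (Real.sqrt_sq (norm_nonneg _)).symm
    _ ≤ Hnorm u := Real.sqrt_le_sqrt h1
  · simp [Hnorm, Real.sqrt_nonneg]

lemma sabra_core (T : ℕ → ℂ) (C G0 : ℝ) (hC : 0 ≤ C) (hG0 : 0 ≤ G0) (w : ℕ → ℝ)
    (hw : Summable w) (hwG : ∑' m, w m ≤ G0 ^ 2)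
    (hb : ∀ m, ‖T m‖ ^ 2 ≤ C ^ 2 * w m) :
    memH T ∧ Hnorm T ≤ C * G0 := by
  have hmem : memH T := Summable.of_nonneg_of_le (fun n => sq_nonneg _) hb (hw.mul_left _)
  refine ⟨hmem, ?_⟩
  have h1 : ∑' n, ‖T n‖ ^ 2 ≤ C ^ 2 * G0 ^ 2 := by
    calc ∑' n, ‖T n‖ ^ 2 ≤ ∑' n, C ^ 2 * w n := Summable.tsum_le_tsum hb hmem (hw.mul_left _)
    _ = C ^ 2 * ∑' n, w n := tsum_mul_left
    _ ≤ C ^ 2 * G0 ^ 2 := mul_le_mul_of_nonneg_left hwG (sq_nonneg C)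
  rw [Hnorm]
  calc Real.sqrt (∑' n, ‖T n‖ ^ 2) ≤ Real.sqrt ((C * G0) ^ 2) :=
        Real.sqrt_le_sqrt (by nlinarith)
  _ = C * G0 := Real.sqrt_sq (by positivity)

lemma extz_natCast_succ (w : ℕ → ℂ) (n : ℕ) : extz w (((n + 1 : ℕ) : ℤ)) = w n := by
  simp [extz]


lemma kwav_pos (k0 lam : ℝ) (hk0 : 0 < k0) (hlam : 1 < lam) (n : ℕ) :
    0 < kwav k0 lam n := by
  have h0 : 0 < lam := lt_trans one_pos hlam
  rw [kwav]; positivity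

lemma vsum_sq (k0 lam : ℝ) (v : ℕ → ℂ) (hv : memV k0 lam v) :
    Summable (fun n => (kwav k0 lam n * ‖v n‖) ^ 2) ∧
    ∑' n, (kwav k0 lam n * ‖v n‖) ^ 2 = (Vnorm k0 lam v) ^ 2 := by
  have he : (fun n => (kwav k0 lam n * ‖v n‖) ^ 2)
      = fun n => kwav k0 lam n ^ 2 * ‖v n‖ ^ 2 := by
    funext n; ring
  constructor
  · rw [he]; exact hv
  · rw [he, Vnorm, Real.sq_sqrt (tsum_nonneg fun n => by positivity)]

def sabraT1 (a k0 lam : ℝ) (u v : ℕ → ℂ) : ℕ → ℂ := fun m =>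
  -Complex.I * ((a : ℂ) * (kz k0 lam ((m : ℤ) + 2) : ℂ) * extz v ((m : ℤ) + 3)
    * starRingEnd ℂ (extz u ((m : ℤ) + 2)))

set_option maxHeartbeats 1000000 in
lemma sabraT1_bound (a k0 lam : ℝ) (hk0 : 0 < k0) (hlam : 1 < lam)
    (u v : ℕ → ℂ) (hu : memH u) (hv : memV k0 lam v) :
    memH (sabraT1 a k0 lam u v) ∧
      Hnorm (sabraT1 a k0 lam u v) ≤ |a| * lam⁻¹ * Hnorm u * Vnorm k0 lam v := by
  have h0 : 0 < lam := lt_trans one_pos hlam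
  obtain ⟨hg2s, hG2⟩ := vsum_sq k0 lam v hv
  have hS0 : 0 ≤ Hnorm u := Real.sqrt_nonneg _
  have hG0 : 0 ≤ Vnorm k0 lam v := Real.sqrt_nonneg _
  refine sabra_core (sabraT1 a k0 lam u v) (|a| * lam⁻¹ * Hnorm u) (Vnorm k0 lam v)
    (by positivity) hG0 (fun m => (kwav k0 lam (m + 2) * ‖v (m + 2)‖) ^ 2)
    ((summable_nat_add_iff 2).2 hg2s) ?_ ?_
  · have h := Summable.sum_add_tsum_nat_add 2 hg2s
    have hnn : (0:ℝ) ≤ ∑ i ∈ Finset.range 2, (kwav k0 lam i * ‖v i‖) ^ 2 :=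
      Finset.sum_nonneg fun i _ => sq_nonneg _
    rw [← hG2]
    linarith [h]
  · intro m
    have e_v : extz v ((m : ℤ) + 3) = v (m + 2) := by
      rw [show (m : ℤ) + 3 = (((m + 2) + 1 : ℕ) : ℤ) by push_cast; ring]
      exact extz_natCast_succ v (m + 2)
    have hkz : kz k0 lam ((m : ℤ) + 2) = k0 * lam ^ (m + 2) := by
      rw [show (m : ℤ) + 2 = ((m + 2 : ℕ) : ℤ) by push_cast; ring, kz, zpow_natCast]
    have hrel : k0 * lam ^ (m + 2) = lam⁻¹ * kwav k0 lam (m + 2) := by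
      rw [kwav, pow_succ]
      field_simp
      ring
    have hn : ‖sabraT1 a k0 lam u v m‖
        = |a| * (k0 * lam ^ (m + 2)) * ‖v (m + 2)‖ * ‖extz u ((m : ℤ) + 2)‖ := by
      simp only [sabraT1, e_v, hkz, norm_mul, norm_neg, Complex.norm_I, one_mul,
        Complex.norm_real, RCLike.norm_conj, Real.norm_eq_abs]
      rw [abs_of_pos hk0, abs_of_pos (pow_pos h0 (m + 2))]
    have hkw := (kwav_pos k0 lam hk0 hlam (m + 2)).le
    have hle : ‖sabraT1 a k0 lam u v m‖
        ≤ (|a| * lam⁻¹ * Hnorm u) * (kwav k0 lam (m + 2) * ‖v (m + 2)‖) := by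
      calc ‖sabraT1 a k0 lam u v m‖
          = (|a| * lam⁻¹ * (kwav k0 lam (m + 2) * ‖v (m + 2)‖)) * ‖extz u ((m : ℤ) + 2)‖ := by
            rw [hn, hrel]; ring
        _ ≤ (|a| * lam⁻¹ * (kwav k0 lam (m + 2) * ‖v (m + 2)‖)) * Hnorm u := by
            apply mul_le_mul_of_nonneg_left (norm_extz_le' u hu _)
            have := norm_nonneg (v (m + 2))
            positivity
        _ = (|a| * lam⁻¹ * Hnorm u) * (kwav k0 lam (m + 2) * ‖v (m + 2)‖) := by ring
    calc ‖sabraT1 a k0 lam u v m‖ ^ 2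
        ≤ ((|a| * lam⁻¹ * Hnorm u) * (kwav k0 lam (m + 2) * ‖v (m + 2)‖)) ^ 2 :=
          pow_le_pow_left₀ (norm_nonneg _) hle 2
      _ = (|a| * lam⁻¹ * Hnorm u) ^ 2 * (kwav k0 lam (m + 2) * ‖v (m + 2)‖) ^ 2 :=
          mul_pow _ _ 2


def sabraT2 (b k0 lam : ℝ) (u v : ℕ → ℂ) : ℕ → ℂ := fun m =>
  -Complex.I * ((b : ℂ) * (kz k0 lam ((m : ℤ) + 1) : ℂ) * extz v ((m : ℤ) + 2)
    * starRingEnd ℂ (extz u (m : ℤ)))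

set_option maxHeartbeats 1000000 in
lemma sabraT2_bound (b k0 lam : ℝ) (hk0 : 0 < k0) (hlam : 1 < lam)
    (u v : ℕ → ℂ) (hu : memH u) (hv : memV k0 lam v) :
    memH (sabraT2 b k0 lam u v) ∧
      Hnorm (sabraT2 b k0 lam u v) ≤ |b| * lam⁻¹ * Hnorm u * Vnorm k0 lam v := by
  have h0 : 0 < lam := lt_trans one_pos hlam
  obtain ⟨hg2s, hG2⟩ := vsum_sq k0 lam v hv
  have hS0 : 0 ≤ Hnorm u := Real.sqrt_nonneg _
  have hG0 : 0 ≤ Vnorm k0 lam v := Real.sqrt_nonneg _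
  refine sabra_core (sabraT2 b k0 lam u v) (|b| * lam⁻¹ * Hnorm u) (Vnorm k0 lam v)
    (by positivity) hG0 (fun m => (kwav k0 lam (m + 1) * ‖v (m + 1)‖) ^ 2)
    ((summable_nat_add_iff 1).2 hg2s) ?_ ?_
  · have h := Summable.sum_add_tsum_nat_add 1 hg2s
    have hnn : (0:ℝ) ≤ ∑ i ∈ Finset.range 1, (kwav k0 lam i * ‖v i‖) ^ 2 :=
      Finset.sum_nonneg fun i _ => sq_nonneg _
    rw [← hG2]
    linarith [h]
  · intro m
    have e_v : extz v ((m : ℤ) + 2) = v (m + 1) := by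
      rw [show (m : ℤ) + 2 = (((m + 1) + 1 : ℕ) : ℤ) by push_cast; ring]
      exact extz_natCast_succ v (m + 1)
    have hkz : kz k0 lam ((m : ℤ) + 1) = k0 * lam ^ (m + 1) := by
      rw [show (m : ℤ) + 1 = ((m + 1 : ℕ) : ℤ) by push_cast; ring, kz, zpow_natCast]
    have hrel : k0 * lam ^ (m + 1) = lam⁻¹ * kwav k0 lam (m + 1) := by
      rw [kwav, pow_succ]
      field_simp
      ring
    have hn : ‖sabraT2 b k0 lam u v m‖
        = |b| * (k0 * lam ^ (m + 1)) * ‖v (m + 1)‖ * ‖extz u (m : ℤ)‖ := by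
      simp only [sabraT2, e_v, hkz, norm_mul, norm_neg, Complex.norm_I, one_mul,
        Complex.norm_real, RCLike.norm_conj, Real.norm_eq_abs]
      rw [abs_of_pos hk0, abs_of_pos (pow_pos h0 (m + 1))]
    have hkw := (kwav_pos k0 lam hk0 hlam (m + 1)).le
    have hle : ‖sabraT2 b k0 lam u v m‖
        ≤ (|b| * lam⁻¹ * Hnorm u) * (kwav k0 lam (m + 1) * ‖v (m + 1)‖) := by
      calc ‖sabraT2 b k0 lam u v m‖
          = (|b| * lam⁻¹ * (kwav k0 lam (m + 1) * ‖v (m + 1)‖)) * ‖extz u (m : ℤ)‖ := by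
            rw [hn, hrel]; ring
        _ ≤ (|b| * lam⁻¹ * (kwav k0 lam (m + 1) * ‖v (m + 1)‖)) * Hnorm u := by
            apply mul_le_mul_of_nonneg_left (norm_extz_le' u hu _)
            have := norm_nonneg (v (m + 1))
            positivity
        _ = (|b| * lam⁻¹ * Hnorm u) * (kwav k0 lam (m + 1) * ‖v (m + 1)‖) := by ring
    calc ‖sabraT2 b k0 lam u v m‖ ^ 2
        ≤ ((|b| * lam⁻¹ * Hnorm u) * (kwav k0 lam (m + 1) * ‖v (m + 1)‖)) ^ 2 :=
          pow_le_pow_left₀ (norm_nonneg _) hle 2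
      _ = (|b| * lam⁻¹ * Hnorm u) ^ 2 * (kwav k0 lam (m + 1) * ‖v (m + 1)‖) ^ 2 :=
          mul_pow _ _ 2

def sabraT3 (a k0 lam : ℝ) (u v : ℕ → ℂ) : ℕ → ℂ := fun m =>
  -Complex.I * ((a : ℂ) * (kz k0 lam (m : ℤ) : ℂ) * extz u (m : ℤ) * extz v ((m : ℤ) - 1))

set_option maxHeartbeats 1000000 in
lemma sabraT3_bound (a k0 lam : ℝ) (hk0 : 0 < k0) (hlam : 1 < lam)
    (u v : ℕ → ℂ) (hu : memH u) (hv : memV k0 lam v) :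
    memH (sabraT3 a k0 lam u v) ∧
      Hnorm (sabraT3 a k0 lam u v) ≤ |a| * lam * Hnorm u * Vnorm k0 lam v := by
  have h0 : 0 < lam := lt_trans one_pos hlam
  obtain ⟨hg2s, hG2⟩ := vsum_sq k0 lam v hv
  have hS0 : 0 ≤ Hnorm u := Real.sqrt_nonneg _
  have hG0 : 0 ≤ Vnorm k0 lam v := Real.sqrt_nonneg _
  set w : ℕ → ℝ := fun m => if 2 ≤ m then (kwav k0 lam (m - 2) * ‖v (m - 2)‖) ^ 2 else 0
    with hw
  have hws : (fun n => w (n + 2)) = fun n => (kwav k0 lam n * ‖v n‖) ^ 2 := by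
    funext n
    simp [hw]
  have hwsum : Summable w := (summable_nat_add_iff 2).1 (by rw [hws]; exact hg2s)
  refine sabra_core (sabraT3 a k0 lam u v) (|a| * lam * Hnorm u) (Vnorm k0 lam v)
    (by positivity) hG0 w hwsum ?_ ?_
  · have h := Summable.sum_add_tsum_nat_add 2 hwsum
    have h2 : ∑ i ∈ Finset.range 2, w i = 0 := by
      simp [hw, Finset.sum_range_succ]
    rw [h2, zero_add, hws] at h
    rw [← h, hG2]
  · intro m
    match m with
    | 0 => simp [sabraT3, extz, hw]
    | 1 => simp [sabraT3, extz, hw]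
    | (n + 2) =>
      have e_v : extz v (((n + 2 : ℕ) : ℤ) - 1) = v n := by
        rw [show ((n + 2 : ℕ) : ℤ) - 1 = ((n + 1 : ℕ) : ℤ) by push_cast; ring]
        exact extz_natCast_succ v n
      have hkz : kz k0 lam ((n + 2 : ℕ) : ℤ) = k0 * lam ^ (n + 2) := by
        rw [kz, zpow_natCast]
      have hrel : k0 * lam ^ (n + 2) = lam * kwav k0 lam n := by
        rw [kwav]; ring
      have hn : ‖sabraT3 a k0 lam u v (n + 2)‖
          = |a| * (k0 * lam ^ (n + 2)) * ‖extz u ((n + 2 : ℕ) : ℤ)‖ * ‖v n‖ := by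
        simp only [sabraT3, e_v, hkz, norm_mul, norm_neg, Complex.norm_I, one_mul,
          Complex.norm_real, Real.norm_eq_abs]
        rw [abs_of_pos hk0, abs_of_pos (pow_pos h0 (n + 2))]
      have hkw := (kwav_pos k0 lam hk0 hlam n).le
      have hwv : w (n + 2) = (kwav k0 lam n * ‖v n‖) ^ 2 := by
        simp [hw]
      have hle : ‖sabraT3 a k0 lam u v (n + 2)‖
          ≤ (|a| * lam * Hnorm u) * (kwav k0 lam n * ‖v n‖) := by
        calc ‖sabraT3 a k0 lam u v (n + 2)‖
            = (|a| * lam * (kwav k0 lam n * ‖v n‖)) * ‖extz u ((n + 2 : ℕ) : ℤ)‖ := by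
              rw [hn, hrel]; ring
          _ ≤ (|a| * lam * (kwav k0 lam n * ‖v n‖)) * Hnorm u := by
              apply mul_le_mul_of_nonneg_left (norm_extz_le' u hu _)
              have := norm_nonneg (v n)
              positivity
          _ = (|a| * lam * Hnorm u) * (kwav k0 lam n * ‖v n‖) := by ring
      rw [hwv]
      calc ‖sabraT3 a k0 lam u v (n + 2)‖ ^ 2
          ≤ ((|a| * lam * Hnorm u) * (kwav k0 lam n * ‖v n‖)) ^ 2 :=
            pow_le_pow_left₀ (norm_nonneg _) hle 2
        _ = (|a| * lam * Hnorm u) ^ 2 * (kwav k0 lam n * ‖v n‖) ^ 2 := mul_pow _ _ 2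

def sabraT4 (b k0 lam : ℝ) (u v : ℕ → ℂ) : ℕ → ℂ := fun m =>
  -Complex.I * ((b : ℂ) * (kz k0 lam (m : ℤ) : ℂ) * extz v (m : ℤ) * extz u ((m : ℤ) - 1))

set_option maxHeartbeats 1000000 in
lemma sabraT4_bound (b k0 lam : ℝ) (hk0 : 0 < k0) (hlam : 1 < lam)
    (u v : ℕ → ℂ) (hu : memH u) (hv : memV k0 lam v) :
    memH (sabraT4 b k0 lam u v) ∧
      Hnorm (sabraT4 b k0 lam u v) ≤ |b| * Hnorm u * Vnorm k0 lam v := by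
  have h0 : 0 < lam := lt_trans one_pos hlam
  obtain ⟨hg2s, hG2⟩ := vsum_sq k0 lam v hv
  have hS0 : 0 ≤ Hnorm u := Real.sqrt_nonneg _
  have hG0 : 0 ≤ Vnorm k0 lam v := Real.sqrt_nonneg _
  set w : ℕ → ℝ := fun m => if 1 ≤ m then (kwav k0 lam (m - 1) * ‖v (m - 1)‖) ^ 2 else 0
    with hw
  have hws : (fun n => w (n + 1)) = fun n => (kwav k0 lam n * ‖v n‖) ^ 2 := by
    funext n
    simp [hw]
  have hwsum : Summable w := (summable_nat_add_iff 1).1 (by rw [hws]; exact hg2s)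
  refine sabra_core (sabraT4 b k0 lam u v) (|b| * Hnorm u) (Vnorm k0 lam v)
    (by positivity) hG0 w hwsum ?_ ?_
  · have h := Summable.sum_add_tsum_nat_add 1 hwsum
    have h2 : ∑ i ∈ Finset.range 1, w i = 0 := by
      simp [hw]
    rw [h2, zero_add, hws] at h
    rw [← h, hG2]
  · intro m
    match m with
    | 0 => simp [sabraT4, extz, hw]
    | (n + 1) =>
      have e_v : extz v ((n + 1 : ℕ) : ℤ) = v n := extz_natCast_succ v n
      have hkz : kz k0 lam ((n + 1 : ℕ) : ℤ) = kwav k0 lam n := by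
        rw [kz, zpow_natCast, kwav]
      have hn : ‖sabraT4 b k0 lam u v (n + 1)‖
          = |b| * kwav k0 lam n * ‖v n‖ * ‖extz u (((n + 1 : ℕ) : ℤ) - 1)‖ := by
        simp only [sabraT4, e_v, hkz, norm_mul, norm_neg, Complex.norm_I, one_mul,
          Complex.norm_real, Real.norm_eq_abs]
        rw [abs_of_pos (kwav_pos k0 lam hk0 hlam n)]
      have hkw := (kwav_pos k0 lam hk0 hlam n).le
      have hwv : w (n + 1) = (kwav k0 lam n * ‖v n‖) ^ 2 := by
        simp [hw]
      have hle : ‖sabraT4 b k0 lam u v (n + 1)‖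
          ≤ (|b| * Hnorm u) * (kwav k0 lam n * ‖v n‖) := by
        calc ‖sabraT4 b k0 lam u v (n + 1)‖
            = (|b| * (kwav k0 lam n * ‖v n‖)) * ‖extz u (((n + 1 : ℕ) : ℤ) - 1)‖ := by
              rw [hn]; ring
          _ ≤ (|b| * (kwav k0 lam n * ‖v n‖)) * Hnorm u := by
              apply mul_le_mul_of_nonneg_left (norm_extz_le' u hu _)
              have := norm_nonneg (v n)
              positivity
          _ = (|b| * Hnorm u) * (kwav k0 lam n * ‖v n‖) := by ring
      rw [hwv]
      calc ‖sabraT4 b k0 lam u v (n + 1)‖ ^ 2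
          ≤ ((|b| * Hnorm u) * (kwav k0 lam n * ‖v n‖)) ^ 2 :=
            pow_le_pow_left₀ (norm_nonneg _) hle 2
        _ = (|b| * Hnorm u) ^ 2 * (kwav k0 lam n * ‖v n‖) ^ 2 := mul_pow _ _ 2



set_option maxHeartbeats 1000000 in
/-- for every `u ∈ H` and `v ∈ V`, `B(u,v) ∈ H` and
`|B(u,v)| ≤ C₁ |u| ‖v‖` with `C₁ = |a|(λ⁻¹ + λ) + |b|(λ⁻¹ + 1)`. -/
theorem sabra_nonlinear_H_V_to_H
    (a b k0 lam : ℝ) (hk0 : 0 < k0) (hlam : 1 < lam)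
    (u v : ℕ → ℂ) (hu : memH u) (hv : memV k0 lam v) :
    memH (sabraB a b k0 lam u v) ∧
      Hnorm (sabraB a b k0 lam u v) ≤ C1 a b lam * Hnorm u * Vnorm k0 lam v := by
  obtain ⟨m1, b1⟩ := sabraT1_bound a k0 lam hk0 hlam u v hu hv
  obtain ⟨m2, b2⟩ := sabraT2_bound b k0 lam hk0 hlam u v hu hv
  obtain ⟨m3, b3⟩ := sabraT3_bound a k0 lam hk0 hlam u v hu hv
  obtain ⟨m4, b4⟩ := sabraT4_bound b k0 lam hk0 hlam u v hu hv
  have hfun : sabraB a b k0 lam u v = fun m =>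
      sabraT1 a k0 lam u v m + sabraT2 b k0 lam u v m
        + sabraT3 a k0 lam u v m + sabraT4 b k0 lam u v m := by
    funext m
    simp only [sabraB, sabraT1, sabraT2, sabraT3, sabraT4]
    ring
  obtain ⟨m12, b12⟩ := hnorm_add' _ _ m1 m2
  obtain ⟨m123, b123⟩ := hnorm_add' _ _ m12 m3
  obtain ⟨m1234, b1234⟩ := hnorm_add' _ _ m123 m4
  rw [hfun]
  constructor
  · exact m1234
  · have hchain : Hnorm (fun m =>
        sabraT1 a k0 lam u v m + sabraT2 b k0 lam u v m
          + sabraT3 a k0 lam u v m + sabraT4 b k0 lam u v m)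
        ≤ Hnorm (sabraT1 a k0 lam u v) + Hnorm (sabraT2 b k0 lam u v)
          + Hnorm (sabraT3 a k0 lam u v) + Hnorm (sabraT4 b k0 lam u v) := by
      calc Hnorm _ ≤ Hnorm (fun m => sabraT1 a k0 lam u v m + sabraT2 b k0 lam u v m
            + sabraT3 a k0 lam u v m) + Hnorm (sabraT4 b k0 lam u v) := b1234
        _ ≤ (Hnorm (fun m => sabraT1 a k0 lam u v m + sabraT2 b k0 lam u v m)
            + Hnorm (sabraT3 a k0 lam u v)) + Hnorm (sabraT4 b k0 lam u v) := by
            linarith [b123]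
        _ ≤ _ := by linarith [b12]
    have hC : C1 a b lam * Hnorm u * Vnorm k0 lam v
        = |a| * lam⁻¹ * Hnorm u * Vnorm k0 lam v
          + |b| * lam⁻¹ * Hnorm u * Vnorm k0 lam v
          + |a| * lam * Hnorm u * Vnorm k0 lam v
          + |b| * Hnorm u * Vnorm k0 lam v := by
      rw [C1]; ring
    linarith

end Sabra
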